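/- For positive integers n_1 ≥ n_2 ≥ ... ≥ n_k, the k-colored Ramsey number of the matchings n_1K_2, ..., n_kK_2 equals n_1 + 1 + Σ_{i=1}^{k} (n_i − 1). -/

import Mathlib

open SimpleGraph Function

namespace GR

/-- The set of copies of a graph `H` (assumed without isolated vertices, so a copy is
identified with its edge set) inside the complete graph on `Fin n`. -/
def copies {α : Type} (H : SimpleGraph α) (n : ℕ) : Set (Set (Sym2 (Fin n))) :=
  {S | ∃ f : α → Fin n, Function.Injective f ∧ S = (Sym2.map f) '' H.edgeSet}

/-- `S` is a monochromatic copy of `H` under the edge-coloring `c`. -/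
def IsMonoCopy {α C : Type} (H : SimpleGraph α) {n : ℕ}
    (c : Sym2 (Fin n) → C) (S : Set (Sym2 (Fin n))) : Prop :=
  S ∈ copies H n ∧ ∃ col, ∀ e ∈ S, c e = col

/-- `S` is a rainbow copy of `G` under the edge-coloring `c`. -/
def IsRainbowCopy {α C : Type} (G : SimpleGraph α) {n : ℕ}
    (c : Sym2 (Fin n) → C) (S : Set (Sym2 (Fin n))) : Prop :=
  S ∈ copies G n ∧ Set.InjOn c S

def HasMonoCopy {α C : Type} (H : SimpleGraph α) {n : ℕ} (c : Sym2 (Fin n) → C) : Prop :=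
  ∃ S, IsMonoCopy H c S

def HasRainbowCopy {α C : Type} (G : SimpleGraph α) {n : ℕ} (c : Sym2 (Fin n) → C) : Prop :=
  ∃ S, IsRainbowCopy G c S

/-- The `k`-colored Gallai-Ramsey number `gr_k(G : H)`. -/
noncomputable def gr {α β : Type} (k : ℕ) (G : SimpleGraph α) (H : SimpleGraph β) : ℕ :=
  sInf {n | ∀ c : Sym2 (Fin n) → Fin k, HasRainbowCopy G c ∨ HasMonoCopy H c}

/-- The diagonal `k`-colored Ramsey number `r_k(H)`. -/
noncomputable def ramsey {β : Type} (k : ℕ) (H : SimpleGraph β) : ℕ :=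
  sInf {n | ∀ c : Sym2 (Fin n) → Fin k, HasMonoCopy H c}

/-- The matching with `n` edges, `nK₂`. -/
def nK2 (n : ℕ) : SimpleGraph (Fin n × Fin 2) :=
  SimpleGraph.fromRel (fun a b => a.1 = b.1)

/-- The path on 5 vertices. -/
def P5 : SimpleGraph (Fin 5) := SimpleGraph.pathGraph 5

/-- The star with three leaves. -/
def K13 : SimpleGraph (Fin 1 ⊕ Fin 3) := completeBipartiteGraph (Fin 1) (Fin 3)

/-- The triangle. -/
def K3 : SimpleGraph (Fin 3) := completeGraph (Fin 3)

/-- Number of monochromatic copies of `H` under the coloring `c`. -/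
noncomputable def monoCopyCount {α C : Type} (H : SimpleGraph α) {n : ℕ}
    (c : Sym2 (Fin n) → C) : ℕ :=
  Set.ncard {S | IsMonoCopy H c S}

/-- Number of rainbow copies of `G` under the coloring `c`. -/
noncomputable def rainbowCopyCount {α C : Type} (G : SimpleGraph α) {n : ℕ}
    (c : Sym2 (Fin n) → C) : ℕ :=
  Set.ncard {S | IsRainbowCopy G c S}

/-- The Gallai-Ramsey multiplicity: the minimum, over exact `k`-colorings of the complete
graph on `gr_k(G:H)` vertices, of the number of rainbow copies of `G` plus the number of
monochromatic copies of `H`. -/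
noncomputable def GM {α β : Type} (k : ℕ) (G : SimpleGraph α) (H : SimpleGraph β) : ℕ :=
  sInf {t | ∃ c : Sym2 (Fin (gr k G H)) → Fin k, Surjective c ∧
    t = rainbowCopyCount G c + monoCopyCount H c}

end GR


namespace CLcore

variable {N k : ℕ}

/-- `M` is a matching of color `i` inside vertex set `W` (edges as ordered pairs). -/
def IsMatch (col : Sym2 (Fin N) → Fin k) (i : Fin k) (W : Finset (Fin N))
    (M : Finset (Fin N × Fin N)) : Prop :=
  (∀ p ∈ M, p.1 ≠ p.2 ∧ p.1 ∈ W ∧ p.2 ∈ W ∧ col s(p.1, p.2) = i) ∧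
  (∀ p ∈ M, ∀ q ∈ M, p ≠ q → p.1 ≠ q.1 ∧ p.1 ≠ q.2 ∧ p.2 ≠ q.1 ∧ p.2 ≠ q.2)

lemma isMatch_empty (col : Sym2 (Fin N) → Fin k) (i : Fin k) (W : Finset (Fin N)) :
    IsMatch col i W ∅ := by constructor <;> simp

lemma IsMatch.mono {col : Sym2 (Fin N) → Fin k} {i : Fin k} {W W' : Finset (Fin N)}
    {M : Finset (Fin N × Fin N)} (h : IsMatch col i W M) (hW : W ⊆ W') :
    IsMatch col i W' M := by
  refine ⟨fun p hp => ?_, h.2⟩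
  obtain ⟨h1, h2, h3, h4⟩ := h.1 p hp
  exact ⟨h1, hW h2, hW h3, h4⟩

lemma IsMatch.subset {col : Sym2 (Fin N) → Fin k} {i : Fin k} {W : Finset (Fin N)}
    {M M' : Finset (Fin N × Fin N)} (h : IsMatch col i W M) (hM : M' ⊆ M) :
    IsMatch col i W M' :=
  ⟨fun p hp => h.1 p (hM hp), fun p hp q hq => h.2 p (hM hp) q (hM hq)⟩

lemma IsMatch.card_le {col : Sym2 (Fin N) → Fin k} {i : Fin k} {W : Finset (Fin N)}
    {M : Finset (Fin N × Fin N)} (h : IsMatch col i W M) : M.card ≤ N := by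
  have hinj : Set.InjOn Prod.fst (M : Set (Fin N × Fin N)) := by
    intro p hp q hq hpq
    by_contra hne
    exact (h.2 p hp q hq hne).1 hpq
  calc M.card = (M.image Prod.fst).card := (Finset.card_image_of_injOn hinj).symm
    _ ≤ (Finset.univ : Finset (Fin N)).card := Finset.card_le_card (by simp)
    _ = N := by simp

/-- matching number of color `i` within `W`. -/
noncomputable def nu (col : Sym2 (Fin N) → Fin k) (i : Fin k) (W : Finset (Fin N)) : ℕ :=
  @Nat.findGreatest (fun s => ∃ M, IsMatch col i W M ∧ M.card = s) (Classical.decPred _) N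

lemma nu_spec (col : Sym2 (Fin N) → Fin k) (i : Fin k) (W : Finset (Fin N)) :
    ∃ M, IsMatch col i W M ∧ M.card = nu col i W := by
  classical
  have h0 : ∃ M, IsMatch col i W M ∧ M.card = 0 := ⟨∅, isMatch_empty col i W, by simp⟩
  exact @Nat.findGreatest_spec 0 (fun s => ∃ M, IsMatch col i W M ∧ M.card = s) (Classical.decPred _) N (Nat.zero_le N) h0

lemma le_nu {col : Sym2 (Fin N) → Fin k} {i : Fin k} {W : Finset (Fin N)}
    {M : Finset (Fin N × Fin N)} (h : IsMatch col i W M) : M.card ≤ nu col i W :=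
  @Nat.le_findGreatest M.card (fun s => ∃ M', IsMatch col i W M' ∧ M'.card = s) (Classical.decPred _) N h.card_le ⟨M, h, rfl⟩

lemma nu_mono {col : Sym2 (Fin N) → Fin k} {i : Fin k} {W W' : Finset (Fin N)}
    (hW : W ⊆ W') : nu col i W ≤ nu col i W' := by
  obtain ⟨M, hM, hcard⟩ := nu_spec col i W
  exact hcard ▸ le_nu (hM.mono hW)

/-- support of a matching -/
def spt (M : Finset (Fin N × Fin N)) : Finset (Fin N) :=
  M.biUnion (fun p => {p.1, p.2})

lemma mem_spt {M : Finset (Fin N × Fin N)} {v : Fin N} :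
    v ∈ spt M ↔ ∃ p ∈ M, v = p.1 ∨ v = p.2 := by
  simp [spt]

lemma card_spt {col : Sym2 (Fin N) → Fin k} {i : Fin k} {W : Finset (Fin N)}
    {M : Finset (Fin N × Fin N)} (h : IsMatch col i W M) : (spt M).card = 2 * M.card := by
  rw [spt, Finset.card_biUnion]
  · rw [Finset.sum_congr rfl (fun p hp => ?_), Finset.sum_const, smul_eq_mul, mul_comm]
    rw [Finset.card_insert_of_notMem (by simp [Ne, (h.1 p hp).1]), Finset.card_singleton]
  · intro p hp q hq hne
    obtain ⟨h1, h2, h3, h4⟩ := h.2 p hp q hq hne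
    simp only [Finset.disjoint_insert_left, Finset.disjoint_singleton_left,
      Finset.mem_insert, Finset.mem_singleton]
    tauto

lemma spt_subset {col : Sym2 (Fin N) → Fin k} {i : Fin k} {W : Finset (Fin N)}
    {M : Finset (Fin N × Fin N)} (h : IsMatch col i W M) : spt M ⊆ W := by
  intro v hv
  rw [mem_spt] at hv
  obtain ⟨p, hp, hvp⟩ := hv
  rcases hvp with rfl | rfl
  exacts [(h.1 p hp).2.1, (h.1 p hp).2.2.1]

/-- insert a fresh edge into a matching -/
lemma isMatch_insert {col : Sym2 (Fin N) → Fin k} {i : Fin k} {W : Finset (Fin N)}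
    {M : Finset (Fin N × Fin N)} (h : IsMatch col i W M) {x y : Fin N}
    (hx : x ∈ W) (hy : y ∈ W) (hxy : x ≠ y) (hcol : col s(x, y) = i)
    (hxs : x ∉ spt M) (hys : y ∉ spt M) :
    IsMatch col i W (insert (x, y) M) ∧ (insert (x, y) M).card = M.card + 1 := by
  have hnm : (x, y) ∉ M := fun hm => hxs (mem_spt.2 ⟨(x, y), hm, Or.inl rfl⟩)
  have hfresh : ∀ q ∈ M, x ≠ q.1 ∧ x ≠ q.2 ∧ y ≠ q.1 ∧ y ≠ q.2 := by
    intro q hq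
    refine ⟨?_, ?_, ?_, ?_⟩ <;> intro he <;>
      [exact hxs (mem_spt.2 ⟨q, hq, Or.inl he⟩); exact hxs (mem_spt.2 ⟨q, hq, Or.inr he⟩);
       exact hys (mem_spt.2 ⟨q, hq, Or.inl he⟩); exact hys (mem_spt.2 ⟨q, hq, Or.inr he⟩)]
  constructor
  · constructor
    · intro p hp
      rcases Finset.mem_insert.1 hp with rfl | hp'
      · exact ⟨hxy, hx, hy, hcol⟩
      · exact h.1 p hp'
    · intro p hp q hq hne
      rcases Finset.mem_insert.1 hp with rfl | hp' <;> rcases Finset.mem_insert.1 hq with rfl | hq'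
      · exact absurd rfl hne
      · exact hfresh q hq'
      · have := hfresh p hp'; exact ⟨(this.1).symm, (this.2.2.1).symm, (this.2.1).symm, (this.2.2.2).symm⟩
      · exact h.2 p hp' q hq' hne
  · exact Finset.card_insert_of_notMem hnm

/-- an edge of color i inside W makes nu of W∖{x,y} strictly smaller -/
lemma nu_sdiff_lt {col : Sym2 (Fin N) → Fin k} {i : Fin k} {W : Finset (Fin N)}
    {x y : Fin N} (hx : x ∈ W) (hy : y ∈ W) (hxy : x ≠ y) (hcol : col s(x, y) = i) :
    nu col i (W \ {x, y}) + 1 ≤ nu col i W := by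
  obtain ⟨M, hM, hcard⟩ := nu_spec col i (W \ {x, y})
  have hMW : IsMatch col i W M := hM.mono (Finset.sdiff_subset)
  have hxs : x ∉ spt M := fun hs => by
    have := spt_subset hM hs; simp [Finset.mem_sdiff] at this
  have hys : y ∉ spt M := fun hs => by
    have := spt_subset hM hs; simp [Finset.mem_sdiff] at this
  obtain ⟨hins, hc⟩ := isMatch_insert hMW hx hy hxy hcol hxs hys
  calc nu col i (W \ {x, y}) + 1 = (insert (x, y) M).card := by rw [hc, hcard]
    _ ≤ nu col i W := le_nu hins

end CLcore

namespace CLcore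

variable {N k : ℕ}

lemma spt_mono {M M' : Finset (Fin N × Fin N)} (h : M' ⊆ M) : spt M' ⊆ spt M := by
  intro v hv
  rw [mem_spt] at hv ⊢
  obtain ⟨p, hp, hvp⟩ := hv
  exact ⟨p, h hp, hvp⟩

lemma not_mem_spt_erase {col : Sym2 (Fin N) → Fin k} {i : Fin k} {W : Finset (Fin N)}
    {M : Finset (Fin N × Fin N)} (h : IsMatch col i W M) {p : Fin N × Fin N}
    (hp : p ∈ M) {z : Fin N} (hz : z = p.1 ∨ z = p.2) : z ∉ spt (M.erase p) := by
  intro hmem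
  rw [mem_spt] at hmem
  obtain ⟨q, hq, hzq⟩ := hmem
  have hqM : q ∈ M := Finset.mem_of_mem_erase hq
  have hne : q ≠ p := Finset.ne_of_mem_erase hq
  have hd := h.2 p hp q hqM hne.symm
  rcases hz with rfl | rfl <;> rcases hzq with h' | h' <;> simp_all

lemma not_mem_spt_insert {p : Fin N × Fin N} {M : Finset (Fin N × Fin N)} {v : Fin N}
    (h1 : v ≠ p.1) (h2 : v ≠ p.2) (h3 : v ∉ spt M) : v ∉ spt (insert p M) := by
  rw [spt, Finset.biUnion_insert]
  simp only [Finset.mem_union, Finset.mem_insert, Finset.mem_singleton]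
  push_neg
  exact ⟨⟨h1, h2⟩, by rwa [spt] at h3⟩

/-- The key counting lemma: if color `d` has a maximum matching avoiding both `x` and `y`,
then `|U_d| + |Apex_d| ≤ 2 ν_d`. -/
lemma key_count (col : Sym2 (Fin N) → Fin k) {d : Fin k} {x y : Fin N} {W : Finset (Fin N)}
    (hx : x ∈ W) (hy : y ∈ W) (hxy : x ≠ y)
    (hnd : nu col d W ≤ nu col d (W \ {x, y})) :
    ((W \ {x, y}).filter (fun z => col s(x, z) = d ∨ col s(y, z) = d)).card
      + ((W \ {x, y}).filter (fun z => col s(x, z) = d ∧ col s(y, z) = d)).card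
      ≤ 2 * nu col d W := by
  classical
  set T := W \ {x, y} with hT
  obtain ⟨M, hM, hcard⟩ := nu_spec col d T
  have hTW : T ⊆ W := Finset.sdiff_subset
  have hcard' : M.card = nu col d W := le_antisymm (hcard ▸ nu_mono hTW) (hnd.trans hcard.ge)
  have hMW : IsMatch col d W M := hM.mono hTW
  have hsptT : spt M ⊆ T := spt_subset hM
  have hxT : x ∉ T := by simp [hT]
  have hyT : y ∉ T := by simp [hT]
  have hxs : x ∉ spt M := fun hs => hxT (hsptT hs)
  have hys : y ∉ spt M := fun hs => hyT (hsptT hs)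
  set U := T.filter (fun z => col s(x, z) = d ∨ col s(y, z) = d) with hU
  set A := T.filter (fun z => col s(x, z) = d ∧ col s(y, z) = d) with hA
  -- (a) U ⊆ spt M
  have hUspt : U ⊆ spt M := by
    intro z hz
    rw [hU, Finset.mem_filter] at hz
    obtain ⟨hzT, hcolz⟩ := hz
    by_contra hzs
    have hzx : x ≠ z := fun h => hxT (h ▸ hzT)
    have hzy : y ≠ z := fun h => hyT (h ▸ hzT)
    rcases hcolz with hc | hc
    · obtain ⟨hins, hc1⟩ := isMatch_insert hMW hx (hTW hzT) hzx hc hxs hzs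
      have := le_nu hins
      omega
    · obtain ⟨hins, hc1⟩ := isMatch_insert hMW hy (hTW hzT) hzy hc hys hzs
      have := le_nu hins
      omega
  -- partner function
  have hApex_spt : A ⊆ spt M := fun z hz => hUspt (by
    rw [hA, Finset.mem_filter] at hz
    rw [hU, Finset.mem_filter]
    exact ⟨hz.1, Or.inl hz.2.1⟩)
  -- for z ∈ A, choose its edge
  have hedge : ∀ z ∈ A, ∃ p ∈ M, z = p.1 ∨ z = p.2 := by
    intro z hz
    have := hApex_spt hz
    rwa [mem_spt] at this
  set φ : Fin N → Fin N := fun z =>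
    if h : ∃ p ∈ M, z = p.1 ∨ z = p.2 then
      (if z = h.choose.1 then h.choose.2 else h.choose.1)
    else z with hφ
  -- properties of φ on A
  have hφ_spec : ∀ z ∈ A, ∃ p ∈ M, (z = p.1 ∧ φ z = p.2) ∨ (z = p.2 ∧ φ z = p.1) := by
    intro z hz
    have h := hedge z hz
    refine ⟨h.choose, h.choose_spec.1, ?_⟩
    have hev : φ z = if z = h.choose.1 then h.choose.2 else h.choose.1 := by
      rw [hφ]; exact dif_pos h
    rcases h.choose_spec.2 with h1 | h1
    · left; exact ⟨h1, by rw [hev, if_pos h1]⟩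
    · by_cases hz1 : z = h.choose.1
      · exact absurd (hz1.symm.trans h1) (hM.1 _ h.choose_spec.1).1
      · right; exact ⟨h1, by rw [hev, if_neg hz1]⟩
  -- φ z is in spt M \ U for z ∈ A
  have hφ_mem : ∀ z ∈ A, φ z ∈ spt M \ U := by
    intro z hz
    obtain ⟨p, hp, hcase⟩ := hφ_spec z hz
    rw [hA, Finset.mem_filter] at hz
    obtain ⟨hzT, hcxz, hcyz⟩ := hz
    have hφspt : φ z ∈ spt M := by
      rw [mem_spt]
      rcases hcase with ⟨_, h2⟩ | ⟨_, h2⟩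
      · exact ⟨p, hp, Or.inr h2⟩
      · exact ⟨p, hp, Or.inl h2⟩
    rw [Finset.mem_sdiff]
    refine ⟨hφspt, fun hUmem => ?_⟩
    -- φ z ∈ U leads to a bigger matching
    rw [hU, Finset.mem_filter] at hUmem
    obtain ⟨hwT, hwcol⟩ := hUmem
    set w := φ z with hw
    -- z and w are the two endpoints of p
    have hzw : (z = p.1 ∧ w = p.2) ∨ (z = p.2 ∧ w = p.1) := hcase
    have hzwne : z ≠ w := by
      rcases hzw with ⟨h1, h2⟩ | ⟨h1, h2⟩ <;> rw [h1, h2]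
      exacts [(hM.1 p hp).1, (hM.1 p hp).1.symm]
    have hzsptE : z ∉ spt (M.erase p) :=
      not_mem_spt_erase hM hp (by rcases hzw with ⟨h1, _⟩ | ⟨h1, _⟩; exacts [Or.inl h1, Or.inr h1])
    have hwsptE : w ∉ spt (M.erase p) :=
      not_mem_spt_erase hM hp (by rcases hzw with ⟨_, h2⟩ | ⟨_, h2⟩; exacts [Or.inr h2, Or.inl h2])
    have hME : IsMatch col d W (M.erase p) := hMW.subset (Finset.erase_subset _ _)
    have hxsE : x ∉ spt (M.erase p) := fun h => hxs (spt_mono (Finset.erase_subset _ _) h)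
    have hysE : y ∉ spt (M.erase p) := fun h => hys (spt_mono (Finset.erase_subset _ _) h)
    have hzW : z ∈ W := hTW hzT
    have hwW : w ∈ W := hTW hwT
    have hxz : x ≠ z := fun h => hxT (h ▸ hzT)
    have hyz : y ≠ z := fun h => hyT (h ▸ hzT)
    have hxw : x ≠ w := fun h => hxT (h ▸ hwT)
    have hyw : y ≠ w := fun h => hyT (h ▸ hwT)
    have hcardE : (M.erase p).card = M.card - 1 := Finset.card_erase_of_mem hp
    have hMpos : 1 ≤ M.card := Finset.card_pos.2 ⟨p, hp⟩
    rcases hwcol with hcw | hcw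
    · -- col s(x,w) = d : use edges (y,z) and (x,w)
      obtain ⟨hins1, hc1⟩ := isMatch_insert hME hy hzW hyz hcyz hysE hzsptE
      have hxs1 : x ∉ spt (insert (y, z) (M.erase p)) :=
        not_mem_spt_insert hxy hxz hxsE
      have hws1 : w ∉ spt (insert (y, z) (M.erase p)) :=
        not_mem_spt_insert (Ne.symm hyw) (Ne.symm hzwne) hwsptE
      obtain ⟨hins2, hc2⟩ := isMatch_insert hins1 hx hwW hxw hcw hxs1 hws1
      have := le_nu hins2
      omega
    · -- col s(y,w) = d : use edges (x,z) and (y,w)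
      obtain ⟨hins1, hc1⟩ := isMatch_insert hME hx hzW hxz hcxz hxsE hzsptE
      have hys1 : y ∉ spt (insert (x, z) (M.erase p)) :=
        not_mem_spt_insert (Ne.symm hxy) hyz hysE
      have hws1 : w ∉ spt (insert (x, z) (M.erase p)) :=
        not_mem_spt_insert (Ne.symm hxw) (Ne.symm hzwne) hwsptE
      obtain ⟨hins2, hc2⟩ := isMatch_insert hins1 hy hwW hyw hcw hys1 hws1
      have := le_nu hins2
      omega
  -- φ is injective on A
  have hφ_inj : Set.InjOn φ (A : Set (Fin N)) := by
    intro z hz z' hz' heq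
    obtain ⟨p, hp, hc⟩ := hφ_spec z hz
    obtain ⟨p', hp', hc'⟩ := hφ_spec z' hz'
    by_cases hpp : p = p'
    · subst hpp
      rcases hc with ⟨h1, h2⟩ | ⟨h1, h2⟩ <;> rcases hc' with ⟨h1', h2'⟩ | ⟨h1', h2'⟩ <;>
        rw [h2, h2'] at heq
      · rw [h1, h1']
      · exact absurd heq.symm (hM.1 p hp).1
      · exact absurd heq (hM.1 p hp).1
      · rw [h1, h1']
    · exfalso
      have hd := hM.2 p hp p' hp' hpp
      rcases hc with ⟨h1, h2⟩ | ⟨h1, h2⟩ <;> rcases hc' with ⟨h1', h2'⟩ | ⟨h1', h2'⟩ <;>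
        rw [h2, h2'] at heq
      exacts [hd.2.2.2 heq, hd.2.2.1 heq, hd.2.1 heq, hd.1 heq]
  -- conclude
  have hAcard : A.card ≤ (spt M \ U).card := by
    apply Finset.card_le_card_of_injOn φ (fun z hz => hφ_mem z hz) hφ_inj
  have hUcard := Finset.card_sdiff_add_card_eq_card hUspt
  have := card_spt hM
  omega

end CLcore

namespace CLcore

variable {N k : ℕ}

lemma isMatch_single {col : Sym2 (Fin N) → Fin k} {W : Finset (Fin N)} {u v : Fin N}
    (hu : u ∈ W) (hv : v ∈ W) (huv : u ≠ v) :
    IsMatch col (col s(u, v)) W {(u, v)} := by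
  constructor
  · intro p hp
    rw [Finset.mem_singleton] at hp
    subst hp
    exact ⟨huv, hu, hv, rfl⟩
  · intro p hp q hq hne
    rw [Finset.mem_singleton] at hp hq
    exact absurd (hp.trans hq.symm) hne

lemma deg_le {col : Sym2 (Fin N) → Fin k} {i : Fin k} {W : Finset (Fin N)} {x : Fin N}
    (hx : x ∈ W) (hnodrop : nu col i W ≤ nu col i (W.erase x)) :
    ((W.erase x).filter (fun u => col s(x, u) = i)).card ≤ 2 * nu col i W := by
  classical
  obtain ⟨M, hM, hcard⟩ := nu_spec col i (W.erase x)
  have hEW : W.erase x ⊆ W := Finset.erase_subset _ _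
  have hcard' : M.card = nu col i W := le_antisymm (hcard ▸ nu_mono hEW) (hnodrop.trans hcard.ge)
  have hMW : IsMatch col i W M := hM.mono hEW
  have hxs : x ∉ spt M := fun hs => (Finset.mem_erase.1 (spt_subset hM hs)).1 rfl
  have hsub : (W.erase x).filter (fun u => col s(x, u) = i) ⊆ spt M := by
    intro u hu
    rw [Finset.mem_filter] at hu
    obtain ⟨huE, hucol⟩ := hu
    by_contra hus
    have hxu : x ≠ u := fun h => (Finset.mem_erase.1 huE).1 h.symm
    obtain ⟨hins, hc⟩ := isMatch_insert hMW hx (hEW huE) hxu hucol hxs hus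
    have := le_nu hins
    omega
  calc ((W.erase x).filter (fun u => col s(x, u) = i)).card ≤ (spt M).card :=
        Finset.card_le_card hsub
    _ = 2 * M.card := card_spt hM
    _ = 2 * nu col i W := by rw [hcard']

noncomputable def totnu (col : Sym2 (Fin N) → Fin k) (W : Finset (Fin N)) : ℕ :=
  ∑ i : Fin k, nu col i W

noncomputable def maxnu (col : Sym2 (Fin N) → Fin k) (W : Finset (Fin N)) : ℕ :=
  Finset.univ.sup (fun i => nu col i W)

lemma maxnu_mono {col : Sym2 (Fin N) → Fin k} {W W' : Finset (Fin N)} (h : W' ⊆ W) :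
    maxnu col W' ≤ maxnu col W :=
  Finset.sup_mono_fun (fun i _ => nu_mono h)

lemma totnu_drop1 {col : Sym2 (Fin N) → Fin k} {W W' : Finset (Fin N)} (hW : W' ⊆ W)
    (i₀ : Fin k) (h : nu col i₀ W' < nu col i₀ W) : totnu col W' < totnu col W :=
  Finset.sum_lt_sum (fun i _ => nu_mono hW) ⟨i₀, Finset.mem_univ _, h⟩

lemma totnu_drop2 {col : Sym2 (Fin N) → Fin k} {W W' : Finset (Fin N)} (hW : W' ⊆ W)
    {i₀ i₁ : Fin k} (hne : i₀ ≠ i₁) (h0 : nu col i₀ W' < nu col i₀ W)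
    (h1 : nu col i₁ W' < nu col i₁ W) : totnu col W' + 2 ≤ totnu col W := by
  classical
  have e0 : totnu col W' = nu col i₀ W' + ∑ i ∈ Finset.univ.erase i₀, nu col i W' :=
    (Finset.add_sum_erase _ _ (Finset.mem_univ i₀)).symm
  have e0' : totnu col W = nu col i₀ W + ∑ i ∈ Finset.univ.erase i₀, nu col i W :=
    (Finset.add_sum_erase _ _ (Finset.mem_univ i₀)).symm
  have hm1 : i₁ ∈ Finset.univ.erase i₀ := Finset.mem_erase.2 ⟨hne.symm, Finset.mem_univ _⟩
  have e1 : ∑ i ∈ Finset.univ.erase i₀, nu col i W' =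
      nu col i₁ W' + ∑ i ∈ (Finset.univ.erase i₀).erase i₁, nu col i W' :=
    (Finset.add_sum_erase _ _ hm1).symm
  have e1' : ∑ i ∈ Finset.univ.erase i₀, nu col i W =
      nu col i₁ W + ∑ i ∈ (Finset.univ.erase i₀).erase i₁, nu col i W :=
    (Finset.add_sum_erase _ _ hm1).symm
  have hrest : ∑ i ∈ (Finset.univ.erase i₀).erase i₁, nu col i W' ≤
      ∑ i ∈ (Finset.univ.erase i₀).erase i₁, nu col i W :=
    Finset.sum_le_sum (fun i _ => nu_mono hW)
  omega

lemma point_count {c₀ a b : Fin k} :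
    2 ≤ (∑ d ∈ Finset.univ.erase c₀,
        ((if a = d ∨ b = d then 1 else 0) + (if a = d ∧ b = d then 1 else 0)))
      + (if a = c₀ then 1 else 0) + (if b = c₀ then 1 else 0) := by
  classical
  by_cases ha : a = c₀ <;> by_cases hb : b = c₀
  · rw [if_pos ha, if_pos hb]
    omega
  · have hmb : b ∈ Finset.univ.erase c₀ := Finset.mem_erase.2 ⟨hb, Finset.mem_univ _⟩
    have h1 : 1 ≤ ((if a = b ∨ b = b then 1 else 0) + (if a = b ∧ b = b then 1 else 0) : ℕ) := by
      simp
    have h2 := Finset.single_le_sum (f := fun d =>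
        ((if a = d ∨ b = d then 1 else 0) + (if a = d ∧ b = d then 1 else 0) : ℕ))
      (fun i _ => Nat.zero_le _) hmb
    have hS := le_trans h1 h2
    beta_reduce at hS
    rw [if_pos ha, if_neg hb]
    omega
  · have hma : a ∈ Finset.univ.erase c₀ := Finset.mem_erase.2 ⟨ha, Finset.mem_univ _⟩
    have h1 : 1 ≤ ((if a = a ∨ b = a then 1 else 0) + (if a = a ∧ b = a then 1 else 0) : ℕ) := by
      simp
    have h2 := Finset.single_le_sum (f := fun d =>
        ((if a = d ∨ b = d then 1 else 0) + (if a = d ∧ b = d then 1 else 0) : ℕ))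
      (fun i _ => Nat.zero_le _) hma
    have hS := le_trans h1 h2
    beta_reduce at hS
    rw [if_neg ha, if_pos hb]
    omega
  · by_cases hab : a = b
    · subst hab
      have hma : a ∈ Finset.univ.erase c₀ := Finset.mem_erase.2 ⟨ha, Finset.mem_univ _⟩
      have h1 : 2 ≤ ((if a = a ∨ a = a then 1 else 0) + (if a = a ∧ a = a then 1 else 0) : ℕ) := by
        simp
      have h2 := Finset.single_le_sum (f := fun d =>
          ((if a = d ∨ a = d then 1 else 0) + (if a = d ∧ a = d then 1 else 0) : ℕ))
        (fun i _ => Nat.zero_le _) hma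
      have hS := le_trans h1 h2
      beta_reduce at hS
      rw [if_neg ha]
      omega
    · have hsub : ({a, b} : Finset (Fin k)) ⊆ Finset.univ.erase c₀ := by
        intro d hd
        rcases Finset.mem_insert.1 hd with rfl | hd'
        · exact Finset.mem_erase.2 ⟨ha, Finset.mem_univ _⟩
        · rw [Finset.mem_singleton] at hd'
          subst hd'
          exact Finset.mem_erase.2 ⟨hb, Finset.mem_univ _⟩
      have h2 : ∑ d ∈ ({a, b} : Finset (Fin k)), (1 : ℕ) ≤
          ∑ d ∈ ({a, b} : Finset (Fin k)),
            ((if a = d ∨ b = d then 1 else 0) + (if a = d ∧ b = d then 1 else 0)) := by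
        apply Finset.sum_le_sum
        intro d hd
        rcases Finset.mem_insert.1 hd with rfl | hd'
        · simp
        · rw [Finset.mem_singleton] at hd'
          subst hd'
          simp
      have h3 : ∑ d ∈ ({a, b} : Finset (Fin k)),
            ((if a = d ∨ b = d then 1 else 0) + (if a = d ∧ b = d then 1 else 0)) ≤
          ∑ d ∈ Finset.univ.erase c₀,
            ((if a = d ∨ b = d then 1 else 0) + (if a = d ∧ b = d then 1 else 0)) :=
        Finset.sum_le_sum_of_subset hsub
      have h4 : ∑ d ∈ ({a, b} : Finset (Fin k)), (1 : ℕ) = 2 := by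
        rw [Finset.sum_const, smul_eq_mul, mul_one, Finset.card_insert_of_notMem (by simp [hab]),
          Finset.card_singleton]
      rw [if_neg ha, if_neg hb]
      omega

end CLcore

namespace CLcore

variable {N k : ℕ}

theorem claimS (col : Sym2 (Fin N) → Fin k) (W : Finset (Fin N)) :
    W.card ≤ totnu col W + maxnu col W + 1 := by
  classical
  induction W using Finset.strongInduction with
  | _ W ih =>
  by_cases hsmall : W.card ≤ 1
  · omega
  push_neg at hsmall
  obtain ⟨u, hu, v, hv, huv⟩ := Finset.one_lt_card.1 hsmall
  have hneu : (Finset.univ : Finset (Fin k)).Nonempty := ⟨col s(u, v), Finset.mem_univ _⟩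
  obtain ⟨c₀, -, hc₀⟩ := Finset.exists_mem_eq_sup Finset.univ hneu (fun i => nu col i W)
  have hc₀' : maxnu col W = nu col c₀ W := hc₀
  have hm1 : 1 ≤ nu col c₀ W := by
    have h1 : ({(u, v)} : Finset (Fin N × Fin N)).card ≤ nu col (col s(u, v)) W :=
      le_nu (isMatch_single hu hv huv)
    have h2 : nu col (col s(u, v)) W ≤ maxnu col W :=
      Finset.le_sup (f := fun i => nu col i W) (Finset.mem_univ _)
    rw [Finset.card_singleton] at h1
    omega
  obtain ⟨M₀, hM₀, hcard₀⟩ := nu_spec col c₀ W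
  obtain ⟨p, hp⟩ : M₀.Nonempty := Finset.card_pos.1 (by omega)
  obtain ⟨x, y⟩ := p
  have hxW : x ∈ W := (hM₀.1 _ hp).2.1
  have hyW : y ∈ W := (hM₀.1 _ hp).2.2.1
  have hxy : x ≠ y := (hM₀.1 _ hp).1
  have hcolxy : col s(x, y) = c₀ := (hM₀.1 _ hp).2.2.2
  set T := W \ {x, y} with hT
  have hTW : T ⊆ W := Finset.sdiff_subset
  have hxT : x ∉ T := by simp [hT]
  have hyT : y ∉ T := by simp [hT]
  have hxyW : ({x, y} : Finset (Fin N)) ⊆ W := by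
    intro z hz
    rcases Finset.mem_insert.1 hz with rfl | hz'
    · exact hxW
    · rw [Finset.mem_singleton] at hz'; exact hz' ▸ hyW
  have hxy2 : ({x, y} : Finset (Fin N)).card = 2 := by
    rw [Finset.card_insert_of_notMem (by simp [hxy]), Finset.card_singleton]
  have hcardT : T.card + 2 = W.card := by
    have h1 : T.card = W.card - ({x, y} : Finset (Fin N)).card := Finset.card_sdiff_of_subset hxyW
    have h2 := Finset.card_le_card hxyW
    omega
  by_cases hA : nu col c₀ (W.erase x) < nu col c₀ W
  · have ihx := ih _ (Finset.erase_ssubset hxW)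
    have hd1 : totnu col (W.erase x) < totnu col W :=
      totnu_drop1 (Finset.erase_subset _ _) c₀ hA
    have hd2 : maxnu col (W.erase x) ≤ maxnu col W := maxnu_mono (Finset.erase_subset _ _)
    have hce : (W.erase x).card + 1 = W.card := Finset.card_erase_add_one hxW
    omega
  by_cases hB : nu col c₀ (W.erase y) < nu col c₀ W
  · have ihy := ih _ (Finset.erase_ssubset hyW)
    have hd1 : totnu col (W.erase y) < totnu col W :=
      totnu_drop1 (Finset.erase_subset _ _) c₀ hB
    have hd2 : maxnu col (W.erase y) ≤ maxnu col W := maxnu_mono (Finset.erase_subset _ _)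
    have hce : (W.erase y).card + 1 = W.card := Finset.card_erase_add_one hyW
    omega
  by_cases hC : ∃ d, d ≠ c₀ ∧ nu col d T < nu col d W
  · obtain ⟨d, hdne, hdrop⟩ := hC
    have hc₀drop : nu col c₀ T < nu col c₀ W := by
      have hsd : nu col c₀ T + 1 ≤ nu col c₀ W := nu_sdiff_lt hxW hyW hxy hcolxy
      omega
    have hd2 := totnu_drop2 hTW hdne hdrop hc₀drop
    have ihT := ih _ ⟨hTW, fun hsub => hxT (hsub hxW)⟩
    have hd3 : maxnu col T ≤ maxnu col W := maxnu_mono hTW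
    omega
  -- Case D : the direct counting argument
  push_neg at hA hB hC
  set m := nu col c₀ W with hm
  have hdegx : ((W.erase x).filter (fun z => col s(x, z) = c₀)).card ≤ 2 * m := deg_le hxW hA
  have hdegy : ((W.erase y).filter (fun z => col s(y, z) = c₀)).card ≤ 2 * m := deg_le hyW hB
  have hcolyx : col s(y, x) = c₀ := by rw [Sym2.eq_swap]; exact hcolxy
  -- refined degree bounds within T
  have hDx : (T.filter (fun z => col s(x, z) = c₀)).card + 1 ≤ 2 * m := by
    have hsub : insert y (T.filter (fun z => col s(x, z) = c₀)) ⊆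
        (W.erase x).filter (fun z => col s(x, z) = c₀) := by
      intro z hz
      rcases Finset.mem_insert.1 hz with rfl | hz'
      · exact Finset.mem_filter.2 ⟨Finset.mem_erase.2 ⟨hxy.symm, hyW⟩, hcolxy⟩
      · rw [Finset.mem_filter] at hz'
        refine Finset.mem_filter.2 ⟨Finset.mem_erase.2 ⟨?_, hTW hz'.1⟩, hz'.2⟩
        intro hzx
        exact hxT (hzx ▸ hz'.1)
    have hyn : y ∉ T.filter (fun z => col s(x, z) = c₀) := fun h =>
      hyT (Finset.mem_filter.1 h).1
    have := Finset.card_le_card hsub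
    rw [Finset.card_insert_of_notMem hyn] at this
    omega
  have hDy : (T.filter (fun z => col s(y, z) = c₀)).card + 1 ≤ 2 * m := by
    have hsub : insert x (T.filter (fun z => col s(y, z) = c₀)) ⊆
        (W.erase y).filter (fun z => col s(y, z) = c₀) := by
      intro z hz
      rcases Finset.mem_insert.1 hz with rfl | hz'
      · exact Finset.mem_filter.2 ⟨Finset.mem_erase.2 ⟨hxy, hxW⟩, hcolyx⟩
      · rw [Finset.mem_filter] at hz'
        refine Finset.mem_filter.2 ⟨Finset.mem_erase.2 ⟨?_, hTW hz'.1⟩, hz'.2⟩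
        intro hzy
        exact hyT (hzy ▸ hz'.1)
    have hxn : x ∉ T.filter (fun z => col s(y, z) = c₀) := fun h =>
      hxT (Finset.mem_filter.1 h).1
    have := Finset.card_le_card hsub
    rw [Finset.card_insert_of_notMem hxn] at this
    omega
  -- key count applied to every other color
  have hkey : ∀ d ∈ Finset.univ.erase c₀,
      (T.filter (fun z => col s(x, z) = d ∨ col s(y, z) = d)).card
        + (T.filter (fun z => col s(x, z) = d ∧ col s(y, z) = d)).card
        ≤ 2 * nu col d W := by
    intro d hd
    exact key_count col hxW hyW hxy (hC d (Finset.mem_erase.1 hd).1)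
  have hsum1 : ∑ d ∈ Finset.univ.erase c₀,
      ((T.filter (fun z => col s(x, z) = d ∨ col s(y, z) = d)).card
        + (T.filter (fun z => col s(x, z) = d ∧ col s(y, z) = d)).card)
      ≤ ∑ d ∈ Finset.univ.erase c₀, 2 * nu col d W := Finset.sum_le_sum hkey
  -- double counting lower bound
  have hsum2 : 2 * T.card ≤ (∑ d ∈ Finset.univ.erase c₀,
      ((T.filter (fun z => col s(x, z) = d ∨ col s(y, z) = d)).card
        + (T.filter (fun z => col s(x, z) = d ∧ col s(y, z) = d)).card))
      + (T.filter (fun z => col s(x, z) = c₀)).card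
      + (T.filter (fun z => col s(y, z) = c₀)).card := by
    have step1 : 2 * T.card = ∑ z ∈ T, (2 : ℕ) := by
      rw [Finset.sum_const, smul_eq_mul, mul_comm]
    have step2 : ∑ z ∈ T, (2 : ℕ) ≤ ∑ z ∈ T,
        ((∑ d ∈ Finset.univ.erase c₀,
          ((if col s(x, z) = d ∨ col s(y, z) = d then 1 else 0)
            + (if col s(x, z) = d ∧ col s(y, z) = d then 1 else 0)))
          + (if col s(x, z) = c₀ then 1 else 0) + (if col s(y, z) = c₀ then 1 else 0)) :=
      Finset.sum_le_sum (fun z _ => point_count)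
    have step3 : ∑ z ∈ T,
        ((∑ d ∈ Finset.univ.erase c₀,
          ((if col s(x, z) = d ∨ col s(y, z) = d then 1 else 0)
            + (if col s(x, z) = d ∧ col s(y, z) = d then 1 else 0)))
          + (if col s(x, z) = c₀ then 1 else 0) + (if col s(y, z) = c₀ then 1 else 0))
        = (∑ z ∈ T, ∑ d ∈ Finset.univ.erase c₀,
          ((if col s(x, z) = d ∨ col s(y, z) = d then 1 else 0)
            + (if col s(x, z) = d ∧ col s(y, z) = d then 1 else 0)))
          + (∑ z ∈ T, (if col s(x, z) = c₀ then 1 else 0))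
          + (∑ z ∈ T, (if col s(y, z) = c₀ then 1 else 0)) := by
      rw [Finset.sum_add_distrib, Finset.sum_add_distrib]
    have step4 : ∑ z ∈ T, ∑ d ∈ Finset.univ.erase c₀,
          ((if col s(x, z) = d ∨ col s(y, z) = d then 1 else 0)
            + (if col s(x, z) = d ∧ col s(y, z) = d then 1 else 0))
        = ∑ d ∈ Finset.univ.erase c₀,
            ((T.filter (fun z => col s(x, z) = d ∨ col s(y, z) = d)).card
              + (T.filter (fun z => col s(x, z) = d ∧ col s(y, z) = d)).card) := by
      rw [Finset.sum_comm]
      apply Finset.sum_congr rfl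
      intro d _
      rw [Finset.sum_add_distrib, Finset.card_filter, Finset.card_filter]
    have step5 : ∑ z ∈ T, (if col s(x, z) = c₀ then 1 else 0)
        = (T.filter (fun z => col s(x, z) = c₀)).card := (Finset.card_filter _ _).symm
    have step6 : ∑ z ∈ T, (if col s(y, z) = c₀ then 1 else 0)
        = (T.filter (fun z => col s(y, z) = c₀)).card := (Finset.card_filter _ _).symm
    omega
  -- assemble
  have htot : totnu col W = m + ∑ d ∈ Finset.univ.erase c₀, nu col d W :=
    (Finset.add_sum_erase _ _ (Finset.mem_univ c₀)).symm
  have hmul : ∑ d ∈ Finset.univ.erase c₀, 2 * nu col d W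
      = 2 * ∑ d ∈ Finset.univ.erase c₀, nu col d W := by
    rw [Finset.mul_sum]
  omega

end CLcore

namespace CLcore

variable {N k : ℕ}

/-- From Claim S: some color has a matching of size `m i`. -/
lemma exists_color_matching (hk : 0 < k) (m : Fin k → ℕ) (hpos : ∀ i, 0 < m i)
    (hdec : ∀ i j : Fin k, i ≤ j → m j ≤ m i) (hN : m ⟨0, hk⟩ + ∑ i : Fin k, (m i - 1) < N)
    (col : Sym2 (Fin N) → Fin k) :
    ∃ i M, IsMatch col i Finset.univ M ∧ M.card = m i := by
  classical
  have hS := claimS col (Finset.univ : Finset (Fin N))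
  rw [Finset.card_univ, Fintype.card_fin] at hS
  by_contra hcon
  push_neg at hcon
  have hnu : ∀ i, nu col i Finset.univ ≤ m i - 1 := by
    intro i
    by_contra hi
    push_neg at hi
    -- nu ≥ m i : extract a matching of size exactly m i
    obtain ⟨M, hM, hcard⟩ := nu_spec col i Finset.univ
    have hle : m i ≤ M.card := by
      have hp : 0 < m i ∨ m i = 0 := by omega
      omega
    obtain ⟨M', hM'sub, hM'card⟩ := Finset.exists_subset_card_eq (s := M) (n := m i) hle
    exact hcon i M' (hM.subset hM'sub) hM'card
  have htot : totnu col Finset.univ ≤ ∑ i : Fin k, (m i - 1) :=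
    Finset.sum_le_sum (fun i _ => hnu i)
  have hmax : maxnu col Finset.univ ≤ m ⟨0, hk⟩ - 1 := by
    apply Finset.sup_le
    intro i _
    have h1 := hnu i
    have h2 : m i ≤ m ⟨0, hk⟩ := hdec ⟨0, hk⟩ i (by simp [Fin.le_def])
    omega
  have hm0 : 0 < m ⟨0, hk⟩ := hpos _
  omega

/-- convert a matching into a monochromatic copy of `nK2 n`. -/
lemma matching_to_copy {col : Sym2 (Fin N) → Fin k} {i : Fin k} {n : ℕ}
    {M : Finset (Fin N × Fin N)} (hM : IsMatch col i Finset.univ M) (hcard : M.card = n) :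
    ∃ f : (Fin n × Fin 2) → Fin N, Function.Injective f ∧
      (∀ j : Fin n, col s(f (j, 0), f (j, 1)) = i) := by
  classical
  have e := M.equivFin
  set edge : Fin n → Fin N × Fin N := fun j => (e.symm (Fin.cast hcard.symm j)).1 with hedge
  have hedgeM : ∀ j, edge j ∈ M := fun j => (e.symm (Fin.cast hcard.symm j)).2
  have hedge_inj : ∀ j j', edge j = edge j' → j = j' := by
    intro j j' h
    have h2 : (e.symm (Fin.cast hcard.symm j)) = (e.symm (Fin.cast hcard.symm j')) :=
      Subtype.ext h
    have h3 := e.symm.injective h2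
    have h4 := congrArg Fin.val h3
    simp only [Fin.coe_cast] at h4
    exact Fin.ext h4
  refine ⟨fun q => if q.2 = 0 then (edge q.1).1 else (edge q.1).2, ?_, ?_⟩
  · rintro ⟨j, b⟩ ⟨j', b'⟩ hq
    simp only at hq
    by_cases hjj : j = j'
    · subst hjj
      by_cases hb : b = 0 <;> by_cases hb' : b' = 0
      · rw [Prod.mk.injEq]; exact ⟨rfl, hb.trans hb'.symm⟩
      · rw [if_pos hb, if_neg hb'] at hq
        exact absurd hq (hM.1 _ (hedgeM j)).1
      · rw [if_neg hb, if_pos hb'] at hq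
        exact absurd hq.symm (hM.1 _ (hedgeM j)).1
      · rw [Prod.mk.injEq]
        refine ⟨rfl, ?_⟩
        have hbv : b.val ≠ 0 := fun h => hb (Fin.ext h)
        have hb'v : b'.val ≠ 0 := fun h => hb' (Fin.ext h)
        have hb2 := b.isLt
        have hb'2 := b'.isLt
        exact Fin.ext (by omega)
    · exfalso
      have hne : edge j ≠ edge j' := fun h => hjj (hedge_inj _ _ h)
      have hdisj := hM.2 _ (hedgeM j) _ (hedgeM j') hne
      by_cases hb : b = 0 <;> by_cases hb' : b' = 0
      · rw [if_pos hb, if_pos hb'] at hq; exact hdisj.1 hq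
      · rw [if_pos hb, if_neg hb'] at hq; exact hdisj.2.1 hq
      · rw [if_neg hb, if_pos hb'] at hq; exact hdisj.2.2.1 hq
      · rw [if_neg hb, if_neg hb'] at hq; exact hdisj.2.2.2 hq
  · intro j
    simp only [if_pos rfl, if_neg (by decide : (1 : Fin 2) ≠ 0)]
    exact (hM.1 _ (hedgeM j)).2.2.2

end CLcore

namespace CLcore

/-- threshold function for the extremal coloring -/
def Tf (k : ℕ) (m : Fin k → ℕ) : ℕ → ℕ := fun J =>
  ∑ j ∈ Finset.range J, (if h : j + 1 < k then m ⟨j + 1, h⟩ - 1 else 0)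

lemma Tf_mono {k : ℕ} (m : Fin k → ℕ) {J J' : ℕ} (h : J ≤ J') : Tf k m J ≤ Tf k m J' :=
  Finset.sum_le_sum_of_subset (Finset.range_subset_range.2 h)

lemma Tf_succ {k : ℕ} (m : Fin k → ℕ) (J : ℕ) :
    Tf k m (J + 1) = Tf k m J + (if h : J + 1 < k then m ⟨J + 1, h⟩ - 1 else 0) :=
  Finset.sum_range_succ _ _

lemma Tf_zero {k : ℕ} (m : Fin k → ℕ) : Tf k m 0 = 0 := rfl

/-- the block-index color of a vertex value `w` -/
noncomputable def fcol (hk : 0 < k) (m : Fin k → ℕ) (w : ℕ) : Fin k :=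
  if h : w < Tf k m (k - 1) then
    have hex : ∃ j, w < Tf k m (j + 1) :=
      ⟨k - 2, lt_of_lt_of_le h (Tf_mono m (by omega))⟩
    have hk2 : 2 ≤ k := by
      by_contra hc
      push_neg at hc
      have hke : k - 1 = 0 := by omega
      rw [hke, Tf_zero] at h
      omega
    have hfind : Nat.find hex ≤ k - 2 :=
      Nat.find_min' hex (lt_of_lt_of_le h (Tf_mono m (by omega)))
    ⟨Nat.find hex + 1, by omega⟩
  else ⟨0, hk⟩

lemma fcol_lt_char {k : ℕ} (hk : 0 < k) (m : Fin k → ℕ) {w : ℕ}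
    (hc : w < Tf k m (k - 1)) :
    ∃ J : ℕ, (fcol hk m w).val = J + 1 ∧ w < Tf k m (J + 1) ∧
      (∀ j < J, ¬ w < Tf k m (j + 1)) := by
  rw [fcol, dif_pos hc]
  have hex : ∃ j, w < Tf k m (j + 1) := ⟨k - 2, lt_of_lt_of_le hc (Tf_mono m (by omega))⟩
  exact ⟨Nat.find hex, rfl, Nat.find_spec hex, fun j hj => Nat.find_min hex hj⟩

lemma fcol_zero {k : ℕ} (hk : 0 < k) (m : Fin k → ℕ) {w : ℕ}
    (h : fcol hk m w = ⟨0, hk⟩) : Tf k m (k - 1) ≤ w := by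
  by_contra hc
  push_neg at hc
  obtain ⟨J, hval, -, -⟩ := fcol_lt_char hk m hc
  rw [h] at hval
  simp at hval

lemma fcol_pos {k : ℕ} (hk : 0 < k) (m : Fin k → ℕ) {w : ℕ} {i : Fin k}
    (hi : i.val ≠ 0) (h : fcol hk m w = i) :
    Tf k m (i.val - 1) ≤ w ∧ w < Tf k m i.val := by
  by_cases hc : w < Tf k m (k - 1)
  · obtain ⟨J, hval, hup, hmin⟩ := fcol_lt_char hk m hc
    rw [h] at hval
    have hup' : w < Tf k m i.val := by rw [hval]; exact hup
    refine ⟨?_, hup'⟩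
    rcases Nat.eq_zero_or_pos J with hf0 | hfpos
    · have h0 : i.val - 1 = 0 := by omega
      rw [h0, Tf_zero]
      exact Nat.zero_le _
    · have hmin' := hmin (J - 1) (by omega)
      push_neg at hmin'
      have heq : J - 1 + 1 = i.val - 1 := by omega
      rwa [heq] at hmin'
  · rw [fcol, dif_neg hc] at h
    exact absurd (by rw [← h]) hi

/-- sum identity relating `Tf` at `k-1` with the full sum. -/
lemma Tf_total {k : ℕ} (hk : 0 < k) (m : Fin k → ℕ) :
    Tf k m (k - 1) + (m ⟨0, hk⟩ - 1) = ∑ i : Fin k, (m i - 1) := by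
  classical
  have h1 : ∑ i : Fin k, (m i - 1)
      = (m ⟨0, hk⟩ - 1) + ∑ i ∈ Finset.univ.erase ⟨0, hk⟩, (m i - 1) :=
    (Finset.add_sum_erase _ _ (Finset.mem_univ _)).symm
  have h2 : Tf k m (k - 1) = ∑ i ∈ Finset.univ.erase ⟨0, hk⟩, (m i - 1) := by
    rw [Tf]
    apply Finset.sum_bij (i := fun (j : ℕ) (hj : j ∈ Finset.range (k - 1)) =>
      (⟨j + 1, by simp at hj; omega⟩ : Fin k))
    · intro a ha
      simp only [Finset.mem_erase, Finset.mem_univ, and_true]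
      intro heq
      have := congrArg Fin.val heq
      simp at this
    · intro a ha b hb hab
      have := congrArg Fin.val hab
      simp only at this
      omega
    · intro i hi
      simp only [Finset.mem_erase, Finset.mem_univ, and_true] at hi
      have hival : i.val ≠ 0 := fun h => hi (Fin.ext h)
      refine ⟨i.val - 1, by simp; omega, ?_⟩
      apply Fin.ext
      simp
      omega
    · intro a ha
      simp only [Finset.mem_range] at ha
      rw [dif_pos (by omega : a + 1 < k)]
  omega

end CLcore

namespace CLcore

theorem lower_coloring {k : ℕ} (hk : 0 < k) (m : Fin k → ℕ) (hpos : ∀ i, 0 < m i)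
    {r : ℕ} (hr : r + 1 ≤ m ⟨0, hk⟩ + 1 + ∑ i : Fin k, (m i - 1)) :
    ∃ colr : Sym2 (Fin r) → Fin k,
      ∀ (i : Fin k) (f : Fin (m i) × Fin 2 → Fin r), Function.Injective f →
        ¬ (∀ j : Fin (m i), colr s(f (j, 0), f (j, 1)) = i) := by
  classical
  refine ⟨fun e => fcol hk m (Sym2.lift ⟨fun u v => min u.val v.val,
    fun u v => min_comm _ _⟩ e), ?_⟩
  intro i f hinj hall
  have hmin : ∀ j : Fin (m i), fcol hk m (min (f (j, 0)).val (f (j, 1)).val) = i := by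
    intro j
    have := hall j
    simpa using this
  by_cases hi : i = ⟨0, hk⟩
  · subst hi
    -- all endpoints have value ≥ Tf (k-1)
    have hbig : ∀ q : Fin (m ⟨0, hk⟩) × Fin 2, Tf k m (k - 1) ≤ (f q).val := by
      rintro ⟨j, b⟩
      have h0 := fcol_zero hk m (hmin j)
      have hb : b = 0 ∨ b = 1 := by
        rcases b with ⟨bv, hbv⟩
        interval_cases bv
        · exact Or.inl rfl
        · exact Or.inr rfl
      rcases hb with rfl | rfl
      · exact h0.trans (min_le_left _ _)
      · exact h0.trans (min_le_right _ _)
    have hcard : (Finset.univ : Finset (Fin (m ⟨0, hk⟩) × Fin 2)).card ≤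
        (Finset.Ico (Tf k m (k - 1)) r).card := by
      apply Finset.card_le_card_of_injOn (fun q => (f q).val)
      · intro q _
        rw [Finset.mem_coe, Finset.mem_Ico]
        exact ⟨hbig q, (f q).isLt⟩
      · intro q _ q' _ hq
        exact hinj (Fin.val_injective hq)
    rw [Finset.card_univ, Fintype.card_prod, Fintype.card_fin, Fintype.card_fin,
      Nat.card_Ico] at hcard
    have htot := Tf_total hk m
    have hp0 := hpos ⟨0, hk⟩
    omega
  · have hival : i.val ≠ 0 := fun h => hi (Fin.ext h)
    have hbounds : ∀ j : Fin (m i),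
        Tf k m (i.val - 1) ≤ min (f (j, 0)).val (f (j, 1)).val ∧
          min (f (j, 0)).val (f (j, 1)).val < Tf k m i.val :=
      fun j => fcol_pos hk m hival (hmin j)
    have hcard : (Finset.univ : Finset (Fin (m i))).card ≤
        (Finset.Ico (Tf k m (i.val - 1)) (Tf k m i.val)).card := by
      apply Finset.card_le_card_of_injOn
        (fun j => min (f (j, 0)).val (f (j, 1)).val)
      · intro j _
        rw [Finset.mem_coe, Finset.mem_Ico]
        exact hbounds j
      · intro j _ j' _ hj
        simp only at hj
        have hch : ∀ jj : Fin (m i), ∃ b : Fin 2,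
            min (f (jj, 0)).val (f (jj, 1)).val = (f (jj, b)).val := by
          intro jj
          rcases min_choice (f (jj, 0)).val (f (jj, 1)).val with h | h
          · exact ⟨0, h⟩
          · exact ⟨1, h⟩
        obtain ⟨b, hb⟩ := hch j
        obtain ⟨b', hb'⟩ := hch j'
        rw [hb, hb'] at hj
        have := hinj (Fin.val_injective hj)
        exact congrArg Prod.fst this
    rw [Finset.card_univ, Fintype.card_fin, Nat.card_Ico] at hcard
    have hstep : Tf k m (i.val - 1 + 1) = Tf k m (i.val - 1) +
        (if h : i.val - 1 + 1 < k then m ⟨i.val - 1 + 1, h⟩ - 1 else 0) := Tf_succ m _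
    have hee : i.val - 1 + 1 = i.val := by omega
    rw [hee] at hstep
    rw [dif_pos i.isLt] at hstep
    simp only [Fin.eta] at hstep
    have hp := hpos i
    omega

end CLcore


open GR in
/-- Cockayne–Lorimer: the multicolor Ramsey number of matchings. -/
theorem ramsey_matchings {k : ℕ} (hk : 0 < k) (m : Fin k → ℕ)
    (hpos : ∀ i, 0 < m i) (hdec : ∀ i j : Fin k, i ≤ j → m j ≤ m i) :
    sInf {r | ∀ c : Sym2 (Fin r) → Fin k,
        ∃ i : Fin k, ∃ S ∈ copies (nK2 (m i)) r, ∀ e ∈ S, c e = i}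
      = m ⟨0, hk⟩ + 1 + ∑ i : Fin k, (m i - 1)    := by
  classical
  have hmem : (m ⟨0, hk⟩ + 1 + ∑ i : Fin k, (m i - 1)) ∈ {r | ∀ c : Sym2 (Fin r) → Fin k,
      ∃ i : Fin k, ∃ S ∈ copies (nK2 (m i)) r, ∀ e ∈ S, c e = i} := by
    intro c
    obtain ⟨i, M, hM, hcard⟩ := CLcore.exists_color_matching hk m hpos hdec (by omega) c
    obtain ⟨f, hfinj, hfcol⟩ := CLcore.matching_to_copy hM hcard
    refine ⟨i, Sym2.map f '' (nK2 (m i)).edgeSet, ⟨f, hfinj, rfl⟩, ?_⟩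
    rintro e ⟨e₀, he₀, rfl⟩
    revert he₀
    induction e₀ using Sym2.ind with
    | _ a b =>
      intro he₀
      rw [SimpleGraph.mem_edgeSet] at he₀
      have hadj : a ≠ b ∧ (a.1 = b.1 ∨ b.1 = a.1) := (SimpleGraph.fromRel_adj _ a b).1 he₀
      have h1 : a.1 = b.1 := by
        rcases hadj.2 with h | h
        · exact h
        · exact h.symm
      have h2 : a.2 ≠ b.2 := fun h => hadj.1 (Prod.ext h1 h)
      have hfin2 : ∀ t : Fin 2, t = 0 ∨ t = 1 := by decide
      rcases hfin2 a.2 with ha2 | ha2 <;> rcases hfin2 b.2 with hb2 | hb2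
      · exact absurd (ha2.trans hb2.symm) h2
      · have ha : a = (a.1, 0) := Prod.ext rfl ha2
        have hb : b = (a.1, 1) := Prod.ext h1.symm hb2
        rw [ha, hb, Sym2.map_pair_eq]
        exact hfcol a.1
      · have ha : a = (a.1, 1) := Prod.ext rfl ha2
        have hb : b = (a.1, 0) := Prod.ext h1.symm hb2
        have hsw : s(a, b) = s(((a.1 : Fin (m i)), (0 : Fin 2)), (a.1, 1)) := by
          rw [ha, hb]
          exact Sym2.eq_swap
        rw [hsw, Sym2.map_pair_eq]
        exact hfcol a.1
      · exact absurd (ha2.trans hb2.symm) h2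
  apply le_antisymm
  · exact Nat.sInf_le hmem
  · apply le_csInf ⟨_, hmem⟩
    intro r hr
    by_contra hlt
    push_neg at hlt
    obtain ⟨colr, hcolr⟩ := CLcore.lower_coloring hk m hpos (show r + 1 ≤ _ by omega)
    obtain ⟨i, S, hS, hmono⟩ := hr colr
    obtain ⟨f, hfinj, rfl⟩ := hS
    apply hcolr i f hfinj
    intro j
    have hedge : s(((j : Fin (m i)), (0 : Fin 2)), (j, (1 : Fin 2))) ∈ (nK2 (m i)).edgeSet := by
      rw [SimpleGraph.mem_edgeSet]
      apply (SimpleGraph.fromRel_adj _ _ _).2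
      refine ⟨?_, Or.inl rfl⟩
      intro h
      have := congrArg Prod.snd h
      simp at this
    have := hmono _ ⟨_, hedge, rfl⟩
    rwa [Sym2.map_pair_eq] at this
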